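/- If (F', Δ') on Fin N' is synaptically equivalent to (F, Δ) on Fin N (both satisfying the standing assumptions), then N' ≤ #{pairs (i, B) : i a neuron of (F, Δ), B a homogeneous part of (F, Δ), Δ_{i,B} ≠ 0}. (Upper bound on the number of neurons within a synaptical equivalence class, following from the proposition that a dynamically richer synaptically equivalent network has at least as many neurons together with the existence of the optimum.) -/
import Mathlib


namespace NeuralNet

open Classical

/-- Neurons `i` and `j` are *structurally identical*: `i = j`, or else the intrinsic
dynamics labels coincide, the mutual synaptic actions vanish, and every other neuron
acts equally on both. -/
def StructId {α : Type*} {N : ℕ} (F : Fin N → α) (Δ : Fin N → Fin N → ℝ)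
    (i j : Fin N) : Prop :=
  i = j ∨ (F i = F j ∧ Δ i j = 0 ∧ Δ j i = 0 ∧ ∀ h, h ≠ i → h ≠ j → Δ h i = Δ h j)

/-- A *homogeneous part* is an equivalence class of the structural-identity relation. -/
def IsHomPart {α : Type*} {N : ℕ} (F : Fin N → α) (Δ : Fin N → Fin N → ℝ)
    (A : Set (Fin N)) : Prop :=
  ∃ i, A = {j | StructId F Δ i j}

/-- A subset `U` of a homogeneous part `A` is a *unit-candidate* if for every neuron
`h ∉ A` there is at most one `i ∈ U` with `Δ i h ≠ 0`. -/
def UnitCandidate {N : ℕ} (Δ : Fin N → Fin N → ℝ) (A U : Set (Fin N)) : Prop :=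
  U ⊆ A ∧ ∀ h ∉ A, ∀ i ∈ U, ∀ j ∈ U, Δ i h ≠ 0 → Δ j h ≠ 0 → i = j

/-- A partition of the homogeneous part `A` into nonempty unit-candidates. -/
def IsUnitPartition {N : ℕ} (Δ : Fin N → Fin N → ℝ) (A : Set (Fin N))
    (P : Set (Set (Fin N))) : Prop :=
  (∀ U ∈ P, U.Nonempty ∧ UnitCandidate Δ A U) ∧ P.PairwiseDisjoint id ∧ ⋃₀ P = A

/-- A *synaptical unit* is a member of a partition of some homogeneous part `A` into
nonempty unit-candidates whose number of parts is minimal. -/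
def IsSynapticalUnit {α : Type*} {N : ℕ} (F : Fin N → α) (Δ : Fin N → Fin N → ℝ)
    (U : Set (Fin N)) : Prop :=
  ∃ A P, IsHomPart F Δ A ∧ IsUnitPartition Δ A P ∧
    (∀ Q, IsUnitPartition Δ A Q → P.ncard ≤ Q.ncard) ∧ U ∈ P

/-- `deltaIB Δ i B` : the common value of `Δ i h` over `h ∈ B` (defined by choice of a
representative of `B`; it is well-defined when `B` is a homogeneous part). -/
noncomputable def deltaIB {N : ℕ} (Δ : Fin N → Fin N → ℝ) (i : Fin N)
    (B : Set (Fin N)) : ℝ :=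
  if hB : B.Nonempty then Δ i hB.choose else 0

/-- `deltaUB Δ U B` : the inter-unit weight `Δ_{U,B}`; it is `0` if `deltaIB Δ i B = 0`
for every `i ∈ U`, and otherwise the value `deltaIB Δ i B` for a chosen `i ∈ U` with
nonzero value (unique when `U` is a unit-candidate and `B` a homogeneous part). -/
noncomputable def deltaUB {N : ℕ} (Δ : Fin N → Fin N → ℝ) (U B : Set (Fin N)) : ℝ :=
  if h : ∃ i ∈ U, deltaIB Δ i B ≠ 0 then deltaIB Δ h.choose B else 0

/-- Neuron `i` is *excitatory*. -/
def Excitatory {N : ℕ} (Δ : Fin N → Fin N → ℝ) (i : Fin N) : Prop :=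
  (∀ j, 0 ≤ Δ i j) ∧ ∃ j, 0 < Δ i j

/-- Neuron `i` is *inhibitory*. -/
def Inhibitory {N : ℕ} (Δ : Fin N → Fin N → ℝ) (i : Fin N) : Prop :=
  (∀ j, Δ i j ≤ 0) ∧ ∃ j, Δ i j < 0

/-- Neuron `i` is *mixed*. -/
def Mixed {N : ℕ} (Δ : Fin N → Fin N → ℝ) (i : Fin N) : Prop :=
  (∃ j, 0 < Δ i j) ∧ ∃ j, Δ i j < 0

/-- The image of a homogeneous part `B` under the unit bijection `φ`: the union of the
images of the units of `P` contained in `B`. -/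
def partImage {N N' : ℕ} (P : Set (Set (Fin N))) (φ : Set (Fin N) → Set (Fin N'))
    (B : Set (Fin N)) : Set (Fin N') :=
  {i' | ∃ U ∈ P, U ⊆ B ∧ i' ∈ φ U}

/-- The networks `(F, Δ)` on `Fin N` and `(F', Δ')` on `Fin N'` are *synaptically
equivalent*: there are partitions of each set of neurons into synaptical units and a
bijection `φ` between them preserving homogeneous parts, inter-unit weights, and
intrinsic dynamics labels. -/
def SynEquiv {α : Type*} {N N' : ℕ} (F : Fin N → α) (Δ : Fin N → Fin N → ℝ)
    (F' : Fin N' → α) (Δ' : Fin N' → Fin N' → ℝ) : Prop :=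
  ∃ (P : Set (Set (Fin N))) (P' : Set (Set (Fin N')))
    (φ : Set (Fin N) → Set (Fin N')),
    (∀ U ∈ P, IsSynapticalUnit F Δ U) ∧ P.PairwiseDisjoint id ∧ ⋃₀ P = Set.univ ∧
    (∀ U' ∈ P', IsSynapticalUnit F' Δ' U') ∧ P'.PairwiseDisjoint id ∧
      ⋃₀ P' = Set.univ ∧
    Set.BijOn φ P P' ∧
    (∀ U ∈ P, ∀ V ∈ P,
      ((∃ A, IsHomPart F Δ A ∧ U ⊆ A ∧ V ⊆ A) ↔
        (∃ A', IsHomPart F' Δ' A' ∧ φ U ⊆ A' ∧ φ V ⊆ A'))) ∧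
    (∀ U ∈ P, ∀ B, IsHomPart F Δ B →
      deltaUB Δ U B = deltaUB Δ' (φ U) (partImage P φ B)) ∧
    (∀ U ∈ P, ∀ i ∈ U, ∀ i' ∈ φ U, F i = F' i')

/-- The labels of the *split network* obtained by splitting the mixed neuron `i`. -/
def splitF {α : Type*} {N : ℕ} (F : Fin N → α) (i : Fin N) : Fin (N + 1) → α :=
  fun j => if hj : (j : ℕ) < N then F ⟨j, hj⟩ else F i

/-- The synaptic actions of the *split network* obtained by splitting the mixed neuron
`i`: neuron `i` keeps the positive parts of its actions, the new neuron `N` gets the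
negative parts, and the new neuron receives exactly what `i` receives. -/
def splitΔ {N : ℕ} (Δ : Fin N → Fin N → ℝ) (i : Fin N) :
    Fin (N + 1) → Fin (N + 1) → ℝ := fun j h =>
  if hj : (j : ℕ) < N then
    if hh : (h : ℕ) < N then
      if (⟨j, hj⟩ : Fin N) = i then max (Δ i ⟨h, hh⟩) 0 else Δ ⟨j, hj⟩ ⟨h, hh⟩
    else
      if (⟨j, hj⟩ : Fin N) = i then 0 else Δ ⟨j, hj⟩ i
  else
    if hh : (h : ℕ) < N then
      if (⟨h, hh⟩ : Fin N) = i then 0 else min (Δ i ⟨h, hh⟩) 0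
    else 0


section Helpers

variable {α : Type*} {N : ℕ} {F : Fin N → α} {Δ : Fin N → Fin N → ℝ}

lemma structId_refl (i : Fin N) : StructId F Δ i i := Or.inl rfl

lemma structId_symm {i j : Fin N} (h : StructId F Δ i j) : StructId F Δ j i := by
  rcases h with h | ⟨h1, h2, h3, h4⟩
  · exact Or.inl h.symm
  · exact Or.inr ⟨h1.symm, h3, h2, fun k hk1 hk2 => (h4 k hk2 hk1).symm⟩

lemma structId_trans {i j k : Fin N} (hij : StructId F Δ i j)
    (hjk : StructId F Δ j k) : StructId F Δ i k := by
  by_cases hij0 : i = j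
  · subst hij0; exact hjk
  by_cases hjk0 : j = k
  · subst hjk0; exact hij
  by_cases hik0 : i = k
  · exact Or.inl hik0
  rcases hij with rfl | ⟨f1, d1, d2, e1⟩
  · exact absurd rfl hij0
  rcases hjk with rfl | ⟨f2, d3, d4, e2⟩
  · exact absurd rfl hjk0
  refine Or.inr ⟨f1.trans f2, ?_, ?_, ?_⟩
  · rw [← e2 i hij0 hik0]; exact d1
  · rw [e1 k (Ne.symm hik0) (Ne.symm hjk0)]; exact d4
  · intro h hhi hhk
    by_cases hhj : h = j
    · subst hhj; rw [d2, d3]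
    · rw [e1 h hhi hhj, e2 h hhj hhk]

lemma isHomPart_nonempty {A : Set (Fin N)} (h : IsHomPart F Δ A) : A.Nonempty := by
  obtain ⟨i, rfl⟩ := h; exact ⟨i, structId_refl i⟩

lemma homPart_eq_of_mem {A B : Set (Fin N)} {x : Fin N} (hA : IsHomPart F Δ A)
    (hB : IsHomPart F Δ B) (hxA : x ∈ A) (hxB : x ∈ B) : A = B := by
  obtain ⟨i, rfl⟩ := hA; obtain ⟨j, rfl⟩ := hB
  simp only [Set.mem_setOf_eq] at hxA hxB
  ext y
  simp only [Set.mem_setOf_eq]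
  constructor
  · intro hy; exact structId_trans (structId_trans hxB (structId_symm hxA)) hy
  · intro hy; exact structId_trans (structId_trans hxA (structId_symm hxB)) hy

lemma structId_of_mem {A : Set (Fin N)} {h k : Fin N} (hA : IsHomPart F Δ A)
    (hh : h ∈ A) (hk : k ∈ A) : StructId F Δ h k := by
  obtain ⟨i, rfl⟩ := hA
  exact structId_trans (structId_symm hh) hk

lemma structId_delta_zero (hdiag : ∀ i, Δ i i = 0) {i j : Fin N}
    (h : StructId F Δ i j) : Δ i j = 0 := by
  rcases h with rfl | ⟨_, h, _, _⟩; exacts [hdiag i, h]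

lemma delta_const (hdiag : ∀ i, Δ i i = 0) {B : Set (Fin N)} (hB : IsHomPart F Δ B)
    (i : Fin N) {a b : Fin N} (ha : a ∈ B) (hb : b ∈ B) : Δ i a = Δ i b := by
  have hab : StructId F Δ a b := structId_of_mem hB ha hb
  by_cases hia : i = a
  · subst hia; rw [hdiag, structId_delta_zero hdiag hab]
  by_cases hib : i = b
  · subst hib; rw [hdiag, structId_delta_zero hdiag (structId_symm hab)]
  rcases hab with rfl | ⟨_, _, _, e⟩
  · rfl
  · exact e i hia hib

lemma deltaIB_eq (hdiag : ∀ i, Δ i i = 0) {B : Set (Fin N)} (hB : IsHomPart F Δ B)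
    {i h : Fin N} (hh : h ∈ B) : deltaIB Δ i B = Δ i h := by
  have hne : B.Nonempty := ⟨h, hh⟩
  rw [deltaIB, dif_pos hne]
  exact delta_const hdiag hB i hne.choose_spec hh

lemma deltaUB_ne_zero_iff {N : ℕ} {Δ : Fin N → Fin N → ℝ} {U B : Set (Fin N)} :
    deltaUB Δ U B ≠ 0 ↔ ∃ i ∈ U, deltaIB Δ i B ≠ 0 := by
  rw [deltaUB]
  split
  · next h => exact iff_of_true h.choose_spec.2 h
  · next h => exact iff_of_false (fun hh => hh rfl) h

lemma synUnit_props {U : Set (Fin N)} (h : IsSynapticalUnit F Δ U) :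
    U.Nonempty ∧ ∃ A, IsHomPart F Δ A ∧ UnitCandidate Δ A U := by
  obtain ⟨A, Q, hA, ⟨hmem, _, _⟩, _, hU⟩ := h
  obtain ⟨hne, hcand⟩ := hmem U hU
  exact ⟨hne, A, hA, hcand⟩

end Helpers

/-- the number of neurons of any network synaptically equivalent to
`(F, Δ)` is at most the number of pairs `(i, B)` with `Δ_{i,B} ≠ 0` in `(F, Δ)`. -/
theorem neuron_count_upper_bound {α : Type*} {N N' : ℕ} (F : Fin N → α)
    (Δ : Fin N → Fin N → ℝ) (hN : 2 ≤ N) (hdiag : ∀ i, Δ i i = 0) (hnind : ∀ i, ∃ j, Δ i j ≠ 0)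
    (F' : Fin N' → α) (Δ' : Fin N' → Fin N' → ℝ)
    (hN' : 2 ≤ N') (hdiag' : ∀ i, Δ' i i = 0) (hnind' : ∀ i, ∃ j, Δ' i j ≠ 0)
    (heq : SynEquiv F Δ F' Δ') :
    N' ≤ {p : Fin N × Set (Fin N) |
      IsHomPart F Δ p.2 ∧ deltaIB Δ p.1 p.2 ≠ 0}.ncard := by
  classical
  obtain ⟨P, P', φ, hPu, hPd, hPc, hP'u, hP'd, hP'c, hbij, hparts, hweights, hFeq⟩ := heq
  set S : Set (Fin N × Set (Fin N)) :=
    {p | IsHomPart F Δ p.2 ∧ deltaIB Δ p.1 p.2 ≠ 0} with hSdef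
  set S' : Set (Fin N' × Set (Fin N')) :=
    {p | IsHomPart F' Δ' p.2 ∧ deltaIB Δ' p.1 p.2 ≠ 0} with hS'def
  set T : Set (Set (Fin N) × Set (Fin N)) :=
    {q | q.1 ∈ P ∧ IsHomPart F Δ q.2 ∧ deltaUB Δ q.1 q.2 ≠ 0} with hTdef
  set T' : Set (Set (Fin N') × Set (Fin N')) :=
    {q | q.1 ∈ P' ∧ IsHomPart F' Δ' q.2 ∧ deltaUB Δ' q.1 q.2 ≠ 0} with hT'def
  have unitP : ∀ U ∈ P, U.Nonempty ∧ ∃ A, IsHomPart F Δ A ∧ UnitCandidate Δ A U :=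
    fun U hU => synUnit_props (hPu U hU)
  have unitP' : ∀ U ∈ P', U.Nonempty ∧ ∃ A, IsHomPart F' Δ' A ∧ UnitCandidate Δ' A U :=
    fun U hU => synUnit_props (hP'u U hU)
  have subPart : ∀ U ∈ P, ∀ B, IsHomPart F Δ B → ∀ x, x ∈ U → x ∈ B → U ⊆ B := by
    intro U hU B hB x hxU hxB
    obtain ⟨-, A, hA, hUA, -⟩ := unitP U hU
    rwa [← homPart_eq_of_mem hA hB (hUA hxU) hxB]
  have subPart' : ∀ U ∈ P', ∀ B, IsHomPart F' Δ' B → ∀ x, x ∈ U → x ∈ B → U ⊆ B := by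
    intro U hU B hB x hxU hxB
    obtain ⟨-, A, hA, hUA, -⟩ := unitP' U hU
    rwa [← homPart_eq_of_mem hA hB (hUA hxU) hxB]
  have coverP : ∀ x : Fin N, ∃ U ∈ P, x ∈ U := by
    intro x
    have hx : x ∈ ⋃₀ P := hPc ▸ Set.mem_univ x
    exact Set.mem_sUnion.mp hx
  have coverP' : ∀ x : Fin N', ∃ U ∈ P', x ∈ U := by
    intro x
    have hx : x ∈ ⋃₀ P' := hP'c ▸ Set.mem_univ x
    exact Set.mem_sUnion.mp hx
  -- the image of a homogeneous part under φ is determined by any unit inside it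
  have keyL : ∀ V ∈ P, ∀ B B', IsHomPart F Δ B → IsHomPart F' Δ' B' →
      V ⊆ B → φ V ⊆ B' → partImage P φ B = B' := by
    intro V hV B B' hB hB' hVB hφVB'
    have hφVne : (φ V).Nonempty := (unitP' (φ V) (hbij.1 hV)).1
    ext y
    constructor
    · rintro ⟨U, hU, hUB, hyφU⟩
      obtain ⟨A', hA', hφU, hφV⟩ := (hparts U hU V hV).mp ⟨B, hB, hUB, hVB⟩
      obtain ⟨z, hz⟩ := hφVne
      rw [homPart_eq_of_mem hA' hB' (hφV hz) (hφVB' hz)] at hφU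
      exact hφU hyφU
    · intro hy
      obtain ⟨W', hW', hyW'⟩ := coverP' y
      have hW'B' : W' ⊆ B' := subPart' W' hW' B' hB' y hyW' hy
      obtain ⟨W, hW, rfl⟩ := hbij.2.2 hW'
      obtain ⟨A, hA, hWA, hVA⟩ := (hparts W hW V hV).mpr ⟨B', hB', hW'B', hφVB'⟩
      obtain ⟨v, hv⟩ := (unitP V hV).1
      have hAB : A = B := homPart_eq_of_mem hA hB (hVA hv) (hVB hv)
      exact ⟨W, hW, hAB ▸ hWA, hyW'⟩
  have star : ∀ B, IsHomPart F Δ B → IsHomPart F' Δ' (partImage P φ B) := by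
    intro B hB
    obtain ⟨x, hx⟩ := isHomPart_nonempty hB
    obtain ⟨V, hV, hxV⟩ := coverP x
    have hVB : V ⊆ B := subPart V hV B hB x hxV hx
    obtain ⟨-, A', hA', hφVA', -⟩ := unitP' (φ V) (hbij.1 hV)
    rw [keyL V hV B A' hB hA' hVB hφVA']
    exact hA'
  have star2 : ∀ B', IsHomPart F' Δ' B' → ∃ B, IsHomPart F Δ B ∧ partImage P φ B = B' := by
    intro B' hB'
    obtain ⟨x, hx⟩ := isHomPart_nonempty hB'
    obtain ⟨W', hW', hxW'⟩ := coverP' x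
    have hW'B' : W' ⊆ B' := subPart' W' hW' B' hB' x hxW' hx
    obtain ⟨W, hW, rfl⟩ := hbij.2.2 hW'
    obtain ⟨-, B, hB, hWB, -⟩ := unitP W hW
    exact ⟨B, hB, keyL W hW B B' hB hB' hWB hW'B'⟩
  -- Step 1 : N' ≤ #S'
  have hstep1 : N' ≤ Nat.card S' := by
    have hex : ∀ i' : Fin N', ∃ B', IsHomPart F' Δ' B' ∧ deltaIB Δ' i' B' ≠ 0 := by
      intro i'
      obtain ⟨j', hj'⟩ := hnind' i'
      refine ⟨{k | StructId F' Δ' j' k}, ⟨j', rfl⟩, ?_⟩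
      rw [deltaIB_eq (F := F') hdiag' ⟨j', rfl⟩ (structId_refl j')]
      exact hj'
    choose Bf hBf1 hBf2 using hex
    have hf : Function.Injective
        (fun i' : Fin N' => (⟨(i', Bf i'), hBf1 i', hBf2 i'⟩ : S')) := by
      intro a b hab
      simpa using congrArg (fun p : S' => p.1.1) hab
    calc N' = Nat.card (Fin N') := by simp
      _ ≤ Nat.card S' := Nat.card_le_card_of_injective _ hf
  -- Step 2 : #S' ≤ #T'
  have hstep2 : Nat.card S' ≤ Nat.card T' := by
    choose u hu1 hu2 using coverP'
    have hmem : ∀ p : S', (u p.1.1, p.1.2) ∈ T' := by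
      rintro ⟨⟨i', B'⟩, hB', hd⟩
      exact ⟨hu1 i', hB', deltaUB_ne_zero_iff.mpr ⟨i', hu2 i', hd⟩⟩
    refine Nat.card_le_card_of_injective
      (fun p : S' => (⟨(u p.1.1, p.1.2), hmem p⟩ : T')) ?_
    rintro ⟨⟨i₁, B₁⟩, hB₁, hd₁⟩ ⟨⟨i₂, B₂⟩, hB₂, hd₂⟩ hab
    simp only [Subtype.mk.injEq, Prod.mk.injEq] at hab ⊢
    obtain ⟨hu12, rfl⟩ := hab
    refine ⟨?_, rfl⟩
    have hUP' : u i₁ ∈ P' := hu1 i₁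
    obtain ⟨-, A, hA, hUA, hcand⟩ := unitP' (u i₁) hUP'
    obtain ⟨h₀, hh₀⟩ := isHomPart_nonempty hB₁
    have hd₁' : Δ' i₁ h₀ ≠ 0 := by rwa [deltaIB_eq hdiag' hB₁ hh₀] at hd₁
    have hd₂' : Δ' i₂ h₀ ≠ 0 := by rwa [deltaIB_eq hdiag' hB₂ hh₀] at hd₂
    have hh₀A : h₀ ∉ A := by
      intro hmemA
      have hABeq : A = B₁ := homPart_eq_of_mem hA hB₁ hmemA hh₀
      have hi₁B : i₁ ∈ B₁ := hABeq ▸ hUA (hu2 i₁)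
      exact hd₁' (by rw [delta_const hdiag' hB₁ i₁ hh₀ hi₁B, hdiag'])
    have hi₂U : i₂ ∈ u i₁ := by rw [hu12]; exact hu2 i₂
    exact hcand h₀ hh₀A i₁ (hu2 i₁) i₂ hi₂U hd₁' hd₂'
  -- Step 3 : #T' ≤ #T
  have hstep3 : Nat.card T' ≤ Nat.card T := by
    have hmem : ∀ q : T, (φ q.1.1, partImage P φ q.1.2) ∈ T' := by
      rintro ⟨⟨U, B⟩, hU, hB, hd⟩
      exact ⟨hbij.1 hU, star B hB, by rw [← hweights U hU B hB]; exact hd⟩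
    refine Nat.card_le_card_of_surjective
      (fun q : T => (⟨(φ q.1.1, partImage P φ q.1.2), hmem q⟩ : T')) ?_
    rintro ⟨⟨U', B'⟩, hU', hB', hd'⟩
    obtain ⟨U, hU, rfl⟩ := hbij.2.2 hU'
    obtain ⟨B, hB, hBB'⟩ := star2 B' hB'
    have hdT : deltaUB Δ U B ≠ 0 := by
      rw [hweights U hU B hB, hBB']; exact hd'
    exact ⟨⟨(U, B), hU, hB, hdT⟩, Subtype.ext (by simp [Prod.ext_iff, hBB'])⟩
  -- Step 4 : #T ≤ #S
  have hstep4 : Nat.card T ≤ Nat.card S := by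
    have hch : ∀ q : T, ∃ i ∈ q.1.1, deltaIB Δ i q.1.2 ≠ 0 :=
      fun q => deltaUB_ne_zero_iff.mp q.2.2.2
    choose f hf1 hf2 using hch
    have hmem : ∀ q : T, (f q, q.1.2) ∈ S := fun q => ⟨q.2.2.1, hf2 q⟩
    refine Nat.card_le_card_of_injective
      (fun q : T => (⟨(f q, q.1.2), hmem q⟩ : S)) ?_
    rintro ⟨⟨U₁, B₁⟩, hq₁⟩ ⟨⟨U₂, B₂⟩, hq₂⟩ hab
    simp only [Subtype.mk.injEq, Prod.mk.injEq] at hab ⊢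
    obtain ⟨hfeq, hBeq⟩ := hab
    refine ⟨?_, hBeq⟩
    have h1 := hf1 ⟨(U₁, B₁), hq₁⟩
    have h2 := hf1 ⟨(U₂, B₂), hq₂⟩
    rw [← hfeq] at h2
    exact hPd.elim hq₁.1 hq₂.1 (Set.not_disjoint_iff.mpr ⟨_, h1, h2⟩)
  calc N' ≤ Nat.card S' := hstep1
    _ ≤ Nat.card T' := hstep2
    _ ≤ Nat.card T := hstep3
    _ ≤ Nat.card S := hstep4
    _ = S.ncard := Nat.card_coe_set_eq S

end NeuralNet
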